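/- (Minimax Theorem) Let U be a Hausdorff real topological vector space, A ⊆ U a nonempty compact convex set, V a real vector space, B ⊆ V a nonempty convex set, and let f : A × B → (−∞,+∞] (extended reals never equal to −∞) satisfy: (i) for each fixed y ∈ B, the map x ↦ f(x,y) is lower semicontinuous on A; (ii) for each fixed y ∈ B, x ↦ f(x,y) is convex, i.e. f(t x₁ + (1−t) x₂, y) ≤ t f(x₁,y) + (1−t) f(x₂,y) for all x₁,x₂ ∈ A and t ∈ (0,1); (iii) for each fixed x ∈ A, y ↦ f(x,y) is concave, i.e. f(x, t y₁ + (1−t) y₂) ≥ t f(x,y₁) + (1−t) f(x,y₂) for all y₁,y₂ ∈ B and t ∈ (0,1). Then sup_{y∈B} inf_{x∈A} f(x,y) = inf_{x∈A} sup_{y∈B} f(x,y). -/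

import Mathlib

open Set Filter Topology

lemma lsc_sublevel_closed {U : Type*} [TopologicalSpace U] {A : Set U} (hA : IsClosed A)
    {g : U → EReal} (hg : LowerSemicontinuousOn g A) (c : EReal) :
    IsClosed {x | x ∈ A ∧ g x ≤ c} := by
  refine isClosed_of_closure_subset fun x hx => ?_
  have hxA : x ∈ A := hA.closure_subset (closure_mono (fun z hz => hz.1) hx)
  refine ⟨hxA, ?_⟩
  by_contra hc
  push_neg at hc
  have hev : ∀ᶠ x' in 𝓝[A] x, c < g x' := hg x hxA c hc
  have hne : (𝓝[{x | x ∈ A ∧ g x ≤ c}] x).NeBot := mem_closure_iff_nhdsWithin_neBot.1 hx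
  have hle : 𝓝[{x | x ∈ A ∧ g x ≤ c}] x ≤ 𝓝[A] x :=
    nhdsWithin_mono _ (fun z hz => hz.1)
  have hev2 : ∀ᶠ x' in 𝓝[{x | x ∈ A ∧ g x ≤ c}] x, c < g x' := hle hev
  have hmem : ∀ᶠ x' in 𝓝[{x | x ∈ A ∧ g x ≤ c}] x, x' ∈ {x | x ∈ A ∧ g x ≤ c} :=
    eventually_mem_nhdsWithin
  obtain ⟨z, hz1, hz2⟩ := (hev2.and hmem).exists
  exact absurd hz2.2 (not_le.2 hz1)

lemma lsc_bddBelow {U : Type*} [TopologicalSpace U] [T2Space U] {A : Set U}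
    (hAc : IsCompact A) {g : U → EReal} (hg : LowerSemicontinuousOn g A)
    (hne : ∀ x ∈ A, g x ≠ ⊥) :
    ∃ m : ℝ, ∀ x ∈ A, (m : EReal) ≤ g x := by
  by_contra h
  push_neg at h
  have hfip : ∀ u : Finset ℕ,
      (A ∩ ⋂ n ∈ u, {x | x ∈ A ∧ g x ≤ ((-(n : ℝ) : ℝ) : EReal)}).Nonempty := by
    intro u
    set N : ℕ := u.sup id with hN
    obtain ⟨x, hxA, hxlt⟩ := h (-(N : ℝ))
    refine ⟨x, hxA, ?_⟩
    simp only [Set.mem_iInter]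
    intro n hn
    refine ⟨hxA, hxlt.le.trans ?_⟩
    have : n ≤ N := Finset.le_sup (f := id) hn
    exact EReal.coe_le_coe_iff.2 (neg_le_neg (Nat.cast_le.2 this))
  obtain ⟨x, hxA, hx⟩ := hAc.inter_iInter_nonempty
    (fun n : ℕ => {x | x ∈ A ∧ g x ≤ ((-(n : ℝ) : ℝ) : EReal)})
    (fun n => lsc_sublevel_closed hAc.isClosed hg _) hfip
  simp only [Set.mem_iInter] at hx
  have hbot : g x = ⊥ := by
    by_contra hb
    obtain ⟨r, hr1, hr2⟩ := EReal.exists_between_coe_real (bot_lt_iff_ne_bot.2 hb)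
    obtain ⟨n, hn⟩ := exists_nat_gt (-r)
    have : g x ≤ ((-(n : ℝ) : ℝ) : EReal) := (hx n).2
    have h2 : ((-(n : ℝ) : ℝ) : EReal) < (r : EReal) := EReal.coe_lt_coe_iff.2 (by linarith)
    exact absurd (this.trans_lt (h2.trans hr2)) (lt_irrefl _)
  exact hne x hxA hbot

set_option maxHeartbeats 1000000

lemma two_fn_lemma {U : Type*} [AddCommGroup U] [Module ℝ U]
    {A : Set U} (hAconv : Convex ℝ A)
    {g h : U → EReal} {m : ℝ}
    (hgm : ∀ x ∈ A, (m : EReal) ≤ g x) (hhm : ∀ x ∈ A, (m : EReal) ≤ h x)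
    (hgc : ∀ x₁ ∈ A, ∀ x₂ ∈ A, ∀ t : ℝ, 0 < t → t < 1 →
      g (t • x₁ + (1 - t) • x₂) ≤ (t : EReal) * g x₁ + ((1 - t : ℝ) : EReal) * g x₂)
    (hhc : ∀ x₁ ∈ A, ∀ x₂ ∈ A, ∀ t : ℝ, 0 < t → t < 1 →
      h (t • x₁ + (1 - t) • x₂) ≤ (t : EReal) * h x₁ + ((1 - t : ℝ) : EReal) * h x₂)
    {c d : ℝ} (hcd : c < d)
    (hcomb : ∀ t : ℝ, 0 < t → t < 1 →
      ∃ x ∈ A, (t : EReal) * g x + ((1 - t : ℝ) : EReal) * h x < (c : EReal)) :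
    ∃ x ∈ A, g x ≤ (d : EReal) ∧ h x ≤ (d : EReal) := by
  by_contra hcon
  push_neg at hcon
  set C : Set (ℝ × ℝ) := {p | ∃ x ∈ A, g x ≤ (p.1 : EReal) ∧ h x ≤ (p.2 : EReal)} with hCdef
  -- C is convex
  have hCconv : Convex ℝ C := by
    rintro p ⟨xp, hxp, hp1, hp2⟩ q ⟨xq, hxq, hq1, hq2⟩ a b ha hb hab
    rcases ha.eq_or_lt with h0 | ha'
    · have hb1 : b = 1 := by linarith
      subst hb1
      simp only [← h0, zero_smul, one_smul, zero_add]
      exact ⟨xq, hxq, hq1, hq2⟩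
    rcases hb.eq_or_lt with h0 | hb'
    · have ha1 : a = 1 := by linarith
      subst ha1
      simp only [← h0, zero_smul, one_smul, add_zero]
      exact ⟨xp, hxp, hp1, hp2⟩
    have hb1 : b = 1 - a := by linarith
    subst hb1
    refine ⟨a • xp + (1 - a) • xq, hAconv hxp hxq ha hb (by ring), ?_, ?_⟩
    · calc g (a • xp + (1 - a) • xq)
          ≤ (a : EReal) * g xp + ((1 - a : ℝ) : EReal) * g xq :=
            hgc xp hxp xq hxq a ha' (by linarith)
        _ ≤ (a : EReal) * (p.1 : EReal) + ((1 - a : ℝ) : EReal) * (q.1 : EReal) :=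
            add_le_add (mul_le_mul_of_nonneg_left hp1 (EReal.coe_nonneg.2 ha))
              (mul_le_mul_of_nonneg_left hq1 (EReal.coe_nonneg.2 hb))
        _ = (((a • p + (1 - a) • q).1 : ℝ) : EReal) := by
            have h1 : (a • p + (1 - a) • q).1 = a * p.1 + (1 - a) * q.1 := by
              simp [Prod.fst_add, Prod.smul_fst, smul_eq_mul]
            rw [h1, ← EReal.coe_mul, ← EReal.coe_mul, ← EReal.coe_add]
    · calc h (a • xp + (1 - a) • xq)
          ≤ (a : EReal) * h xp + ((1 - a : ℝ) : EReal) * h xq :=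
            hhc xp hxp xq hxq a ha' (by linarith)
        _ ≤ (a : EReal) * (p.2 : EReal) + ((1 - a : ℝ) : EReal) * (q.2 : EReal) :=
            add_le_add (mul_le_mul_of_nonneg_left hp2 (EReal.coe_nonneg.2 ha))
              (mul_le_mul_of_nonneg_left hq2 (EReal.coe_nonneg.2 hb))
        _ = (((a • p + (1 - a) • q).2 : ℝ) : EReal) := by
            have h1 : (a • p + (1 - a) • q).2 = a * p.2 + (1 - a) * q.2 := by
              simp [Prod.snd_add, Prod.smul_snd, smul_eq_mul]
            rw [h1, ← EReal.coe_mul, ← EReal.coe_mul, ← EReal.coe_add]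
  set e : ℝ := (c + d) / 2 with hedef
  have hce : c < e := by simp only [hedef]; linarith
  have hed : e < d := by simp only [hedef]; linarith
  -- (e, e) is not in the closure of C
  have henot : ((e, e) : ℝ × ℝ) ∉ closure C := by
    intro hmem
    rw [Metric.mem_closure_iff] at hmem
    obtain ⟨pt, hptC, hdist⟩ := hmem (d - e) (by linarith)
    obtain ⟨x, hxA, hx1, hx2⟩ := hptC
    rw [Prod.dist_eq] at hdist
    have hd1 : dist e pt.1 < d - e := (le_max_left _ _).trans_lt hdist
    have hd2 : dist e pt.2 < d - e := (le_max_right _ _).trans_lt hdist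
    rw [Real.dist_eq, abs_lt] at hd1 hd2
    have hgd : g x ≤ (d : EReal) :=
      hx1.trans (EReal.coe_le_coe_iff.2 (by linarith [hd1.1]))
    have hhd : h x ≤ (d : EReal) :=
      hx2.trans (EReal.coe_le_coe_iff.2 (by linarith [hd2.1]))
    exact absurd hhd (not_le.2 (hcon x hxA hgd))
  -- separation
  obtain ⟨φ, u, hu1, hu2⟩ :=
    geometric_hahn_banach_point_closed hCconv.closure isClosed_closure henot
  set p : ℝ := φ (1, 0) with hpdef
  set q : ℝ := φ (0, 1) with hqdef
  have hφ : ∀ a b : ℝ, φ (a, b) = a * p + b * q := by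
    intro a b
    have hab : ((a, b) : ℝ × ℝ) = a • ((1 : ℝ), (0 : ℝ)) + b • ((0 : ℝ), (1 : ℝ)) := by
      simp [Prod.ext_iff]
    rw [hab, map_add, map_smul, map_smul, smul_eq_mul, smul_eq_mul]
  rw [hφ] at hu1
  -- a point of C
  obtain ⟨x₀, hx₀A, hx₀⟩ := hcomb (1/2) (by norm_num) (by norm_num)
  have hgx₀bot : g x₀ ≠ ⊥ := ((EReal.bot_lt_coe m).trans_le (hgm x₀ hx₀A)).ne'
  have hhx₀bot : h x₀ ≠ ⊥ := ((EReal.bot_lt_coe m).trans_le (hhm x₀ hx₀A)).ne'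
  have hmulg : ((1/2 : ℝ) : EReal) * g x₀ ≠ ⊥ := by
    refine ((EReal.bot_lt_coe ((1/2) * m)).trans_le ?_).ne'
    rw [EReal.coe_mul]
    exact mul_le_mul_of_nonneg_left (hgm x₀ hx₀A) (EReal.coe_nonneg.2 (by norm_num))
  have hmulh : ((1 - 1/2 : ℝ) : EReal) * h x₀ ≠ ⊥ := by
    refine ((EReal.bot_lt_coe ((1 - 1/2) * m)).trans_le ?_).ne'
    rw [EReal.coe_mul]
    exact mul_le_mul_of_nonneg_left (hhm x₀ hx₀A) (EReal.coe_nonneg.2 (by norm_num))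
  have hgx₀top : g x₀ ≠ ⊤ := by
    intro htop
    rw [htop, EReal.coe_mul_top_of_pos (by norm_num : (0:ℝ) < 1/2),
      EReal.top_add_of_ne_bot hmulh] at hx₀
    exact absurd hx₀ not_top_lt
  have hhx₀top : h x₀ ≠ ⊤ := by
    intro htop
    rw [htop, EReal.coe_mul_top_of_pos (by norm_num : (0:ℝ) < 1 - 1/2),
      EReal.add_top_of_ne_bot hmulg] at hx₀
    exact absurd hx₀ not_top_lt
  set a₀ : ℝ := (g x₀).toReal with ha₀def
  set b₀ : ℝ := (h x₀).toReal with hb₀def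
  have hga₀ : g x₀ = (a₀ : EReal) := (EReal.coe_toReal hgx₀top hgx₀bot).symm
  have hhb₀ : h x₀ = (b₀ : EReal) := (EReal.coe_toReal hhx₀top hhx₀bot).symm
  have hmemC0 : ((a₀, b₀) : ℝ × ℝ) ∈ C := ⟨x₀, hx₀A, hga₀.le, hhb₀.le⟩
  -- nonnegativity of p and q
  have hq0 : 0 ≤ q := by
    by_contra hq
    push_neg at hq
    obtain ⟨n, hn⟩ := exists_nat_gt ((a₀ * p + b₀ * q - u) / (-q))
    have hmem : ((a₀, b₀ + n) : ℝ × ℝ) ∈ closure C :=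
      subset_closure ⟨x₀, hx₀A, hga₀.le,
        hhb₀.le.trans (EReal.coe_le_coe_iff.2 (le_add_of_nonneg_right (Nat.cast_nonneg n)))⟩
    have h2 := hu2 _ hmem
    rw [hφ] at h2
    have h3 : (a₀ * p + b₀ * q - u) < n * (-q) := (div_lt_iff₀ (neg_pos.2 hq)).1 hn
    nlinarith
  have hp0 : 0 ≤ p := by
    by_contra hp
    push_neg at hp
    obtain ⟨n, hn⟩ := exists_nat_gt ((a₀ * p + b₀ * q - u) / (-p))
    have hmem : ((a₀ + n, b₀) : ℝ × ℝ) ∈ closure C :=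
      subset_closure ⟨x₀, hx₀A,
        hga₀.le.trans (EReal.coe_le_coe_iff.2 (le_add_of_nonneg_right (Nat.cast_nonneg n))), hhb₀.le⟩
    have h2 := hu2 _ hmem
    rw [hφ] at h2
    have h3 : (a₀ * p + b₀ * q - u) < n * (-p) := (div_lt_iff₀ (neg_pos.2 hp)).1 hn
    nlinarith
  have hpq : 0 < p + q := by
    rcases lt_or_ge 0 (p + q) with h | h
    · exact h
    have hp' : p = 0 := by linarith
    have hq' : q = 0 := by linarith
    have h2 := hu2 _ (subset_closure hmemC0)
    rw [hφ, hp', hq'] at h2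
    rw [hp', hq'] at hu1
    linarith
  -- choose the perturbation
  set K : ℝ := max (c - m) 1 with hKdef
  have hK : 0 < K := lt_of_lt_of_le one_pos (le_max_right _ _)
  have hcs : c * (p + q) < u := by nlinarith [mul_pos (sub_pos.2 hce) hpq]
  set ε : ℝ := (u - c * (p + q)) / (4 * K) with hεdef
  have hε : 0 < ε := div_pos (by linarith) (by linarith)
  have hεK : ε * (4 * K) = u - c * (p + q) := by
    rw [hεdef]; field_simp
  set s2 : ℝ := p + q + 2 * ε with hs2def
  have hs2 : 0 < s2 := by rw [hs2def]; linarith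
  set t' : ℝ := (p + ε) / s2 with ht'def
  have ht'0 : 0 < t' := div_pos (by linarith) hs2
  have ht'1 : t' < 1 := (div_lt_one hs2).2 (by rw [hs2def]; linarith)
  have h1t' : 1 - t' = (q + ε) / s2 := by
    rw [ht'def]
    field_simp
    rw [hs2def]; ring
  set r : ℝ := (u + 2 * ε * m) / s2 with hrdef
  have hrc : c < r := by
    rw [hrdef, lt_div_iff₀ hs2, hs2def]
    nlinarith [mul_le_mul_of_nonneg_left (le_max_left (c - m) 1)
      (by linarith : (0:ℝ) ≤ 2 * ε), hεK]
  -- the key lower bound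
  have hkey : ∀ x ∈ A, (r : EReal) ≤ (t' : EReal) * g x + ((1 - t' : ℝ) : EReal) * h x := by
    intro x hxA
    have hgb : g x ≠ ⊥ := ((EReal.bot_lt_coe m).trans_le (hgm x hxA)).ne'
    have hhb : h x ≠ ⊥ := ((EReal.bot_lt_coe m).trans_le (hhm x hxA)).ne'
    have hmul2 : ((1 - t' : ℝ) : EReal) * h x ≠ ⊥ := by
      refine ((EReal.bot_lt_coe ((1 - t') * m)).trans_le ?_).ne'
      rw [EReal.coe_mul]
      exact mul_le_mul_of_nonneg_left (hhm x hxA) (EReal.coe_nonneg.2 (by linarith))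
    have hmul1 : (t' : EReal) * g x ≠ ⊥ := by
      refine ((EReal.bot_lt_coe (t' * m)).trans_le ?_).ne'
      rw [EReal.coe_mul]
      exact mul_le_mul_of_nonneg_left (hgm x hxA) (EReal.coe_nonneg.2 ht'0.le)
    rcases eq_or_ne (g x) ⊤ with hgt | hgt
    · rw [hgt, EReal.coe_mul_top_of_pos ht'0, EReal.top_add_of_ne_bot hmul2]
      exact le_top
    rcases eq_or_ne (h x) ⊤ with hht | hht
    · rw [hht, EReal.coe_mul_top_of_pos (by linarith : (0:ℝ) < 1 - t'),
        EReal.add_top_of_ne_bot hmul1]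
      exact le_top
    obtain ⟨av, hga⟩ : ∃ a : ℝ, g x = (a : EReal) :=
      ⟨(g x).toReal, (EReal.coe_toReal hgt hgb).symm⟩
    obtain ⟨bv, hhbv⟩ : ∃ b : ℝ, h x = (b : EReal) :=
      ⟨(h x).toReal, (EReal.coe_toReal hht hhb).symm⟩
    have hma : m ≤ av := by
      have := hgm x hxA; rw [hga] at this; exact EReal.coe_le_coe_iff.1 this
    have hmb : m ≤ bv := by
      have := hhm x hxA; rw [hhbv] at this; exact EReal.coe_le_coe_iff.1 this
    have hmemx : ((av, bv) : ℝ × ℝ) ∈ C := ⟨x, hxA, hga.le, hhbv.le⟩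
    have h2 := hu2 _ (subset_closure hmemx)
    rw [hφ] at h2
    have hmain : r ≤ t' * av + (1 - t') * bv := by
      have hnum : u + 2 * ε * m ≤ (p + ε) * av + (q + ε) * bv := by
        nlinarith [mul_le_mul_of_nonneg_left hma hε.le, mul_le_mul_of_nonneg_left hmb hε.le]
      rw [hrdef, h1t', ht'def, div_le_iff₀ hs2]
      have hcalc : ((p + ε) / s2 * av + (q + ε) / s2 * bv) * s2
          = (p + ε) * av + (q + ε) * bv := by
        field_simp
      rw [hcalc]
      exact hnum
    rw [hga, hhbv, ← EReal.coe_mul, ← EReal.coe_mul, ← EReal.coe_add]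
    exact EReal.coe_le_coe_iff.2 hmain
  obtain ⟨x, hxA, hxlt⟩ := hcomb t' ht'0 ht'1
  have hfin := (hkey x hxA).trans_lt hxlt
  exact absurd (EReal.coe_lt_coe_iff.1 hfin) (not_lt.2 hrc.le)


theorem minimax_theorem
    {U : Type*} [AddCommGroup U] [Module ℝ U] [TopologicalSpace U]
    [IsTopologicalAddGroup U] [ContinuousSMul ℝ U] [T2Space U]
    {V : Type*} [AddCommGroup V] [Module ℝ V]
    (A : Set U) (hA : A.Nonempty) (hAcomp : IsCompact A) (hAconv : Convex ℝ A)
    (B : Set V) (hB : B.Nonempty) (hBconv : Convex ℝ B)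
    (f : U → V → EReal)
    (hne_bot : ∀ x ∈ A, ∀ y ∈ B, f x y ≠ ⊥)
    (hlsc : ∀ y ∈ B, LowerSemicontinuousOn (fun x => f x y) A)
    (hconvex : ∀ y ∈ B, ∀ x₁ ∈ A, ∀ x₂ ∈ A, ∀ t : ℝ, 0 < t → t < 1 →
      f (t • x₁ + (1 - t) • x₂) y ≤ (t : EReal) * f x₁ y + ((1 - t : ℝ) : EReal) * f x₂ y)
    (hconcave : ∀ x ∈ A, ∀ y₁ ∈ B, ∀ y₂ ∈ B, ∀ t : ℝ, 0 < t → t < 1 →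
      (t : EReal) * f x y₁ + ((1 - t : ℝ) : EReal) * f x y₂ ≤ f x (t • y₁ + (1 - t) • y₂)) :
    ⨆ y ∈ B, ⨅ x ∈ A, f x y = ⨅ x ∈ A, ⨆ y ∈ B, f x y := by
  classical
  refine le_antisymm ?_ ?_
  · exact iSup₂_le fun y hy => le_iInf₂ fun x hx =>
      le_trans (iInf₂_le x hx) (le_iSup₂ (f := fun y (_ : y ∈ B) => f x y) y hy)
  by_contra hltc
  push_neg at hltc
  set α : EReal := ⨆ y ∈ B, ⨅ x ∈ A, f x y with hαdef
  set β : EReal := ⨅ x ∈ A, ⨆ y ∈ B, f x y with hβdef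
  obtain ⟨c, hc1, hc2⟩ := EReal.exists_between_coe_real hltc
  obtain ⟨d, hd1, hd2⟩ := EReal.exists_between_coe_real hc2
  have hbdd : ∀ y ∈ B, ∃ m : ℝ, ∀ x ∈ A, (m : EReal) ≤ f x y := fun y hy =>
    lsc_bddBelow hAcomp (hlsc y hy) (fun x hx => hne_bot x hx y hy)
  have hαle : ∀ y ∈ B, ⨅ x ∈ A, f x y ≤ α := fun y hy =>
    le_iSup₂ (f := fun y (_ : y ∈ B) => ⨅ x ∈ A, f x y) y hy
  have single : ∀ y ∈ B, ∀ r : ℝ, α < (r : EReal) → ∃ x ∈ A, f x y < (r : EReal) := by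
    intro y hy r hr
    have h1 : ⨅ x ∈ A, f x y < (r : EReal) := (hαle y hy).trans_lt hr
    obtain ⟨x, hx⟩ := iInf_lt_iff.1 h1
    obtain ⟨hxA, hx2⟩ := iInf_lt_iff.1 hx
    exact ⟨x, hxA, hx2⟩
  have key : ∀ n : ℕ, ∀ ys : Fin n → V, (∀ i, ys i ∈ B) → ∀ c' : ℝ, α < (c' : EReal) →
      ∃ x ∈ A, ∀ i, f x (ys i) < (c' : EReal) := by
    intro n
    induction n with
    | zero => exact fun ys _ c' _ => ⟨hA.choose, hA.choose_spec, fun i => i.elim0⟩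
    | succ n IH =>
      intro ys hys c' hc'
      rcases Nat.eq_zero_or_pos n with hn | hn
      · subst hn
        obtain ⟨x, hxA, hx⟩ := single (ys 0) (hys 0) c' hc'
        refine ⟨x, hxA, fun i => ?_⟩
        have hi : i = 0 := Fin.fin_one_eq_zero i
        rw [hi]; exact hx
      · have hnne : Nonempty (Fin n) := ⟨⟨0, hn⟩⟩
        set yl : V := ys (Fin.last n) with hyldef
        set g : U → EReal := fun x => ⨆ i : Fin n, f x (ys i.castSucc) with hgdef
        obtain ⟨m₁, hm₁⟩ := hbdd (ys ((⟨0, hn⟩ : Fin n)).castSucc) (hys _)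
        obtain ⟨m₂, hm₂⟩ := hbdd yl (hys _)
        have hgm : ∀ x ∈ A, ((min m₁ m₂ : ℝ) : EReal) ≤ g x := by
          intro x hx
          refine le_trans ?_ (le_iSup (fun i : Fin n => f x (ys i.castSucc)) ⟨0, hn⟩)
          exact le_trans (EReal.coe_le_coe_iff.2 (min_le_left _ _)) (hm₁ x hx)
        have hhm : ∀ x ∈ A, ((min m₁ m₂ : ℝ) : EReal) ≤ f x yl := fun x hx =>
          le_trans (EReal.coe_le_coe_iff.2 (min_le_right _ _)) (hm₂ x hx)
        have hgc : ∀ x₁ ∈ A, ∀ x₂ ∈ A, ∀ t : ℝ, 0 < t → t < 1 →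
            g (t • x₁ + (1 - t) • x₂) ≤ (t : EReal) * g x₁ + ((1 - t : ℝ) : EReal) * g x₂ := by
          intro x₁ h₁ x₂ h₂ t ht0 ht1
          refine iSup_le fun i => ?_
          refine (hconvex (ys i.castSucc) (hys _) x₁ h₁ x₂ h₂ t ht0 ht1).trans ?_
          exact add_le_add
            (mul_le_mul_of_nonneg_left
              (le_iSup (fun i : Fin n => f x₁ (ys i.castSucc)) i) (EReal.coe_nonneg.2 ht0.le))
            (mul_le_mul_of_nonneg_left
              (le_iSup (fun i : Fin n => f x₂ (ys i.castSucc)) i)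
              (EReal.coe_nonneg.2 (by linarith)))
        have hhc : ∀ x₁ ∈ A, ∀ x₂ ∈ A, ∀ t : ℝ, 0 < t → t < 1 →
            f (t • x₁ + (1 - t) • x₂) yl
              ≤ (t : EReal) * f x₁ yl + ((1 - t : ℝ) : EReal) * f x₂ yl :=
          fun x₁ h₁ x₂ h₂ t ht0 ht1 => hconvex yl (hys _) x₁ h₁ x₂ h₂ t ht0 ht1
        obtain ⟨c₀, hc₀1, hc₀2⟩ := EReal.exists_between_coe_real hc'
        have hc₀c' : c₀ < c' := EReal.coe_lt_coe_iff.1 hc₀2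
        have hcomb : ∀ t : ℝ, 0 < t → t < 1 →
            ∃ x ∈ A, (t : EReal) * g x + ((1 - t : ℝ) : EReal) * f x yl < (c₀ : EReal) := by
          intro t ht0 ht1
          set z : Fin n → V := fun i => t • ys i.castSucc + (1 - t) • yl with hzdef
          have hzB : ∀ i, z i ∈ B := fun i =>
            hBconv (hys _) (hys _) ht0.le (by linarith) (by ring)
          obtain ⟨x, hxA, hx⟩ := IH z hzB c₀ hc₀1
          refine ⟨x, hxA, ?_⟩
          obtain ⟨i₀, hi₀⟩ := Finite.exists_max (fun i : Fin n => f x (ys i.castSucc))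
          have hgx : g x ≤ f x (ys i₀.castSucc) := iSup_le hi₀
          calc (t : EReal) * g x + ((1 - t : ℝ) : EReal) * f x yl
              ≤ (t : EReal) * f x (ys i₀.castSucc) + ((1 - t : ℝ) : EReal) * f x yl :=
                add_le_add (mul_le_mul_of_nonneg_left hgx (EReal.coe_nonneg.2 ht0.le)) le_rfl
            _ ≤ f x (z i₀) := hconcave x hxA _ (hys _) _ (hys _) t ht0 ht1
            _ < (c₀ : EReal) := hx i₀
        obtain ⟨x, hxA, hgx, hhx⟩ := two_fn_lemma hAconv hgm hhm hgc hhc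
          (show c₀ < (c₀ + c') / 2 by linarith) hcomb
        refine ⟨x, hxA, fun i => ?_⟩
        refine Fin.lastCases ?_ ?_ i
        · exact lt_of_le_of_lt hhx (EReal.coe_lt_coe_iff.2 (by linarith))
        · intro j
          exact lt_of_le_of_lt
            (le_trans (le_iSup (fun i : Fin n => f x (ys i.castSucc)) j) hgx)
            (EReal.coe_lt_coe_iff.2 (by linarith))
  have keyset : ∀ s : Finset V, (↑s : Set V) ⊆ B → ∃ x ∈ A, ∀ y ∈ s, f x y ≤ (d : EReal) := by
    intro s hsB
    obtain ⟨x, hxA, hx⟩ := key s.card (fun i => (s.equivFin.symm i : V))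
      (fun i => hsB (s.equivFin.symm i).2) d (hc1.trans hd1)
    refine ⟨x, hxA, fun y hy => ?_⟩
    have hy2 : y = (s.equivFin.symm (s.equivFin ⟨y, hy⟩) : V) := by simp
    rw [hy2]
    exact (hx _).le
  have hclosed : ∀ y : ↥B, IsClosed {x | x ∈ A ∧ f x (y : V) ≤ (d : EReal)} := fun y =>
    lsc_sublevel_closed hAcomp.isClosed (hlsc (y : V) y.2) _
  have hfip : ∀ u : Finset ↥B,
      (A ∩ ⋂ y ∈ u, {x | x ∈ A ∧ f x (y : V) ≤ (d : EReal)}).Nonempty := by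
    intro u
    obtain ⟨x, hxA, hx⟩ := keyset (u.image Subtype.val) (by
      intro y hy
      rw [Finset.coe_image] at hy
      obtain ⟨z, _, rfl⟩ := hy
      exact z.2)
    refine ⟨x, hxA, ?_⟩
    simp only [Set.mem_iInter]
    intro y hy
    exact ⟨hxA, hx _ (Finset.mem_image_of_mem _ hy)⟩
  obtain ⟨x₀, hx₀A, hx₀⟩ := hAcomp.inter_iInter_nonempty _ hclosed hfip
  simp only [Set.mem_iInter] at hx₀
  have hsup : ⨆ y ∈ B, f x₀ y ≤ (d : EReal) :=
    iSup₂_le fun y hy => (hx₀ ⟨y, hy⟩).2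
  have hβd : β ≤ (d : EReal) := le_trans (iInf₂_le x₀ hx₀A) hsup
  exact absurd (hβd.trans_lt hd2) (lt_irrefl β)
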